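/- Let n be a positive integer, X a ±1 sequence of length n with Hamming weight a = ω(X), and k an integer. Then there exists an integer i with 0 ≤ i ≤ a such that P_X(k) = n - 4a + 4i. In particular, n - P_X(k) is divisible by 4 for every k. -/

import Mathlib

/-- A ±1 sequence of length `n`. -/
def IsPM (n : ℕ) (X : ZMod n → ℤ) : Prop := ∀ i, X i = 1 ∨ X i = -1

/-- The Hamming weight: the number of indices where the sequence is `1`. -/
noncomputable def wt (n : ℕ) (X : ZMod n → ℤ) : ℕ := {i | X i = 1}.ncard

/-- The periodic autocorrelation of `X` at shift `k`:
`P_X(k) = Σ_{i=0}^{n-1} (X i) * (X (i + k))`, indices modulo `n`. -/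
def pac (n : ℕ) (X : ZMod n → ℤ) (k : ℤ) : ℤ :=
  ∑ i ∈ Finset.range n, X (i : ZMod n) * X ((i : ZMod n) + (k : ZMod n))

private lemma sum_range_eq_univ (n : ℕ) [NeZero n] (f : ZMod n → ℤ) :
    ∑ i ∈ Finset.range n, f (i : ZMod n) = ∑ j : ZMod n, f j := by
  refine Finset.sum_nbij' (fun i => (i : ZMod n)) (fun j => j.val) ?_ ?_ ?_ ?_ ?_
  · intro i _; exact Finset.mem_univ _
  · intro j _; exact Finset.mem_range.mpr (ZMod.val_lt j)
  · intro i hi; exact ZMod.val_natCast_of_lt (Finset.mem_range.mp hi)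
  · intro j _; exact ZMod.natCast_rightInverse j
  · intro i _; rfl

theorem stmt7 (n : ℕ) (hn : 0 < n) (X : ZMod n → ℤ) (hX : IsPM n X)
    (a : ℕ) (ha : a = wt n X) (k : ℤ) :
    (∃ i : ℕ, i ≤ a ∧ pac n X k = (n : ℤ) - 4 * a + 4 * i) ∧
      (4 : ℤ) ∣ ((n : ℤ) - pac n X k) := by
  haveI : NeZero n := ⟨hn.ne'⟩
  set A : Finset (ZMod n) := Finset.univ.filter (fun i => X i = 1) with hA
  set B : Finset (ZMod n) := Finset.univ.filter (fun i => X (i + (k : ZMod n)) = 1) with hB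
  have hacard : a = A.card := by
    rw [ha, wt, Set.ncard_eq_toFinset_card']
    congr 1
    ext i
    simp [hA]
  have hbcard : B.card = A.card := by
    refine Finset.card_nbij' (fun i => i + (k : ZMod n)) (fun i => i - (k : ZMod n)) ?_ ?_ ?_ ?_
    · intro i hi; simp only [hB, Finset.mem_coe, Finset.mem_filter] at hi; simp [hA, hi.2]
    · intro i hi; simp only [hA, Finset.mem_coe, Finset.mem_filter] at hi
      simp [hB, hi.2]
    · intro i _; simp
    · intro i _; simp
  -- indicator function
  set f : ZMod n → ℤ := fun i => if X i = 1 then 1 else 0 with hf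
  have hXf : ∀ i, X i = 2 * f i - 1 := by
    intro i
    rcases hX i with h | h <;> simp [hf, h]
  have hsumf : ∑ i : ZMod n, f i = (A.card : ℤ) := by
    simp [hf, hA, Finset.sum_ite, Finset.filter_filter]
  have hsumfk : ∑ i : ZMod n, f (i + (k : ZMod n)) = (A.card : ℤ) := by
    rw [← hbcard]
    simp [hf, hB, Finset.sum_ite]
  have hsumff : ∑ i : ZMod n, f i * f (i + (k : ZMod n)) = ((A ∩ B).card : ℤ) := by
    have : ∀ i : ZMod n, f i * f (i + (k : ZMod n)) = if i ∈ A ∩ B then (1 : ℤ) else 0 := by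
      intro i
      simp only [hf, hA, hB, Finset.mem_inter, Finset.mem_filter, Finset.mem_univ, true_and]
      by_cases h1 : X i = 1 <;> by_cases h2 : X (i + (k : ZMod n)) = 1 <;> simp [h1, h2]
    rw [Finset.sum_congr rfl (fun i _ => this i), Finset.sum_ite_mem,
      Finset.univ_inter, Finset.sum_const]
    simp
  have hpac : pac n X k = (n : ℤ) - 4 * a + 4 * ((A ∩ B).card : ℤ) := by
    rw [pac, sum_range_eq_univ n (fun i => X i * X (i + (k : ZMod n)))]
    have : ∀ i : ZMod n, X i * X (i + (k : ZMod n)) =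
        4 * (f i * f (i + (k : ZMod n))) - 2 * f i - 2 * f (i + (k : ZMod n)) + 1 := by
      intro i; rw [hXf i, hXf (i + (k : ZMod n))]; ring
    rw [Finset.sum_congr rfl (fun i _ => this i)]
    simp only [Finset.sum_add_distrib, Finset.sum_sub_distrib, ← Finset.mul_sum,
      hsumf, hsumfk, hsumff, Finset.sum_const, Finset.card_univ, ZMod.card, nsmul_eq_mul,
      mul_one, hacard]
    ring
  have hle : (A ∩ B).card ≤ a := by
    rw [hacard]; exact Finset.card_le_card Finset.inter_subset_left
  refine ⟨⟨(A ∩ B).card, hle, hpac⟩, ?_⟩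
  rw [hpac]
  ring_nf
  exact ⟨a - (A ∩ B).card, by ring⟩
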